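/- For every nontrivial character ŷ of Y, the single-register compressed-oracle unitary cO_ŷ = Comp ∘ O_ŷ ∘ Comp has matrix entries ⟨e_u, cO_ŷ e_r⟩ = γ^ŷ_{u,r} for all u, r ∈ Ȳ, namely: ⟨e_⊥, cO_ŷ e_⊥⟩ = 0; ⟨e_⊥, cO_ŷ e_r⟩ = ŷ(r)/√M and ⟨e_u, cO_ŷ e_⊥⟩ = ŷ(u)/√M for r, u ∈ Y; ⟨e_u, cO_ŷ e_u⟩ = (1 − 2/M)·ŷ(u) + 1/M for u ∈ Y; and ⟨e_u, cO_ŷ e_r⟩ = (1 − ŷ(r) − ŷ(u))/M for u ≠ r in Y. Moreover, for the trivial character 0̂, cO_{0̂} is the identity. -/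

import Mathlib

noncomputable section

noncomputable section

variable {Y : Type*} [Fintype Y] [DecidableEq Y]

omit [DecidableEq Y] in
lemma sum_apply_aux (f : Y → EuclideanSpace ℂ (Option Y)) (b : Option Y) :
    (∑ y : Y, f y) b = ∑ y : Y, f y b :=
  by rw [WithLp.ofLp_sum, Finset.sum_apply]

lemma expand_aux (v : EuclideanSpace ℂ (Option Y)) :
    v = v none • EuclideanSpace.single (none : Option Y) 1
      + ∑ y : Y, v (some y) • EuclideanSpace.single (some y) 1 := by
  ext b
  rcases b with _ | b <;>
    simp [EuclideanSpace.single_apply, PiLp.add_apply, PiLp.smul_apply, sum_apply_aux,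
      Finset.sum_ite_eq]

lemma coeff_aux (v : EuclideanSpace ℂ (Option Y)) (b : Option Y) :
    v b = inner (𝕜 := ℂ) (EuclideanSpace.single b 1) v := by
  simp [EuclideanSpace.inner_single_left]

variable [AddCommGroup Y]

lemma key_aux (c : AddChar Y ℂ)
    (Comp O : EuclideanSpace ℂ (Option Y) →L[ℂ] EuclideanSpace ℂ (Option Y))
    (hO1 : ∀ r : Y, O (EuclideanSpace.single (some r) 1) =
        c r • EuclideanSpace.single (some r) 1)
    (hO2 : O (EuclideanSpace.single (none : Option Y) 1) =
        EuclideanSpace.single none 1)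
    (u r : Option Y) :
    inner (𝕜 := ℂ) (EuclideanSpace.single u 1)
        ((Comp ∘L O ∘L Comp) (EuclideanSpace.single r 1)) =
      inner (𝕜 := ℂ) (EuclideanSpace.single (none : Option Y) 1)
          (Comp (EuclideanSpace.single r 1)) *
        inner (𝕜 := ℂ) (EuclideanSpace.single u 1)
          (Comp (EuclideanSpace.single (none : Option Y) 1))
      + ∑ y : Y,
          inner (𝕜 := ℂ) (EuclideanSpace.single (some y) 1)
              (Comp (EuclideanSpace.single r 1)) *
            (c y * inner (𝕜 := ℂ) (EuclideanSpace.single u 1)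
              (Comp (EuclideanSpace.single (some y) 1))) := by
  have h0 : (Comp ∘L O ∘L Comp) (EuclideanSpace.single r 1)
      = Comp (O (Comp (EuclideanSpace.single r 1))) := rfl
  rw [h0]
  conv_lhs => rw [expand_aux (Comp (EuclideanSpace.single r 1))]
  simp only [map_add, map_smul, map_sum, hO2, hO1, smul_smul, inner_add_right,
    inner_smul_right, inner_sum, coeff_aux]
  congr 1
  refine Finset.sum_congr rfl fun y _ => ?_
  ring

theorem stmt_5' (c : AddChar Y ℂ)
    (Comp : EuclideanSpace ℂ (Option Y) →L[ℂ] EuclideanSpace ℂ (Option Y))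
    (hComp1 : inner (𝕜 := ℂ) (EuclideanSpace.single (none : Option Y) 1)
        (Comp (EuclideanSpace.single none 1)) = 0)
    (hComp2 : ∀ u : Y, inner (𝕜 := ℂ) (EuclideanSpace.single (some u) 1)
        (Comp (EuclideanSpace.single (none : Option Y) 1)) =
        ((Real.sqrt (Fintype.card Y) : ℝ) : ℂ)⁻¹)
    (hComp3 : ∀ u : Y, inner (𝕜 := ℂ) (EuclideanSpace.single (none : Option Y) 1)
        (Comp (EuclideanSpace.single (some u) 1)) =
        ((Real.sqrt (Fintype.card Y) : ℝ) : ℂ)⁻¹)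
    (hComp4 : ∀ u v : Y, inner (𝕜 := ℂ) (EuclideanSpace.single (some u) 1)
        (Comp (EuclideanSpace.single (some v) 1)) =
        (if u = v then (1 : ℂ) else 0) - (Fintype.card Y : ℂ)⁻¹)
    (O : EuclideanSpace ℂ (Option Y) →L[ℂ] EuclideanSpace ℂ (Option Y))
    (hO1 : ∀ r : Y, O (EuclideanSpace.single (some r) 1) =
        c r • EuclideanSpace.single (some r) 1)
    (hO2 : O (EuclideanSpace.single (none : Option Y) 1) =
        EuclideanSpace.single none 1) :
    (c ≠ 1 →
      (inner (𝕜 := ℂ) (EuclideanSpace.single (none : Option Y) 1)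
          ((Comp ∘L O ∘L Comp) (EuclideanSpace.single none 1)) = 0) ∧
      (∀ r : Y, inner (𝕜 := ℂ) (EuclideanSpace.single (none : Option Y) 1)
          ((Comp ∘L O ∘L Comp) (EuclideanSpace.single (some r) 1)) =
          c r / ((Real.sqrt (Fintype.card Y) : ℝ) : ℂ)) ∧
      (∀ u : Y, inner (𝕜 := ℂ) (EuclideanSpace.single (some u) 1)
          ((Comp ∘L O ∘L Comp) (EuclideanSpace.single (none : Option Y) 1)) =
          c u / ((Real.sqrt (Fintype.card Y) : ℝ) : ℂ)) ∧
      (∀ u : Y, inner (𝕜 := ℂ) (EuclideanSpace.single (some u) 1)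
          ((Comp ∘L O ∘L Comp) (EuclideanSpace.single (some u) 1)) =
          (1 - 2 / (Fintype.card Y : ℂ)) * c u + 1 / (Fintype.card Y : ℂ)) ∧
      (∀ u r : Y, u ≠ r → inner (𝕜 := ℂ) (EuclideanSpace.single (some u) 1)
          ((Comp ∘L O ∘L Comp) (EuclideanSpace.single (some r) 1)) =
          (1 - c r - c u) / (Fintype.card Y : ℂ))) ∧
    (c = 1 → Comp ∘L O ∘L Comp = ContinuousLinearMap.id ℂ (EuclideanSpace ℂ (Option Y))) := by
  set q : ℂ := ((Real.sqrt (Fintype.card Y) : ℝ) : ℂ) with hqdef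
  have hM0 : (Fintype.card Y : ℂ) ≠ 0 := Nat.cast_ne_zero.mpr Fintype.card_ne_zero
  have hq : q * q = (Fintype.card Y : ℂ) := by
    rw [hqdef, ← Complex.ofReal_mul, Real.mul_self_sqrt (Nat.cast_nonneg _)]
    simp
  have hq0 : q ≠ 0 := by
    intro h
    rw [h, mul_zero] at hq
    exact hM0 hq.symm
  constructor
  · intro hc
    have hS : ∑ y : Y, c y = 0 := by
      refine AddChar.sum_eq_zero_iff_ne_zero.mpr ?_
      intro h
      exact hc (by rw [h]; rfl)
    refine ⟨?_, fun r => ?_, fun u => ?_, fun u => ?_, fun u r hur => ?_⟩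
    · rw [key_aux c Comp O hO1 hO2, hComp1]
      simp only [hComp2, hComp3]
      rw [show ∑ y : Y, q⁻¹ * (c y * q⁻¹) = (q⁻¹ * q⁻¹) * ∑ y : Y, c y by
        rw [Finset.mul_sum]; exact Finset.sum_congr rfl fun y _ => by ring]
      rw [hS]; ring
    · rw [key_aux c Comp O hO1 hO2, hComp1, hComp3]
      simp only [hComp3, hComp4]
      rw [show ∑ y : Y, ((if y = r then (1:ℂ) else 0) - (Fintype.card Y : ℂ)⁻¹) * (c y * q⁻¹)
          = (∑ y : Y, (if y = r then c y * q⁻¹ else 0))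
            - ((Fintype.card Y : ℂ)⁻¹ * q⁻¹) * ∑ y : Y, c y by
        rw [Finset.mul_sum, ← Finset.sum_sub_distrib]
        refine Finset.sum_congr rfl fun y _ => ?_
        by_cases h : y = r
        · simp only [if_pos h]; ring
        · simp only [if_neg h]; ring]
      rw [hS, Finset.sum_ite_eq' Finset.univ r fun y => c y * q⁻¹]
      simp only [Finset.mem_univ, if_true]
      field_simp
      ring
    · rw [key_aux c Comp O hO1 hO2, hComp1, hComp2]
      simp only [hComp2, hComp4]
      rw [show ∑ y : Y, q⁻¹ * (c y * ((if u = y then (1:ℂ) else 0) - (Fintype.card Y : ℂ)⁻¹))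
          = (∑ y : Y, (if y = u then c y * q⁻¹ else 0))
            - ((Fintype.card Y : ℂ)⁻¹ * q⁻¹) * ∑ y : Y, c y by
        rw [Finset.mul_sum, ← Finset.sum_sub_distrib]
        refine Finset.sum_congr rfl fun y _ => ?_
        by_cases h : y = u
        · simp only [if_pos h, if_pos h.symm]; ring
        · simp only [if_neg h, if_neg (Ne.symm h)]; ring]
      rw [hS, Finset.sum_ite_eq' Finset.univ u fun y => c y * q⁻¹]
      simp only [Finset.mem_univ, if_true]
      field_simp
      ring
    · rw [key_aux c Comp O hO1 hO2, hComp3, hComp2]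
      simp only [hComp4]
      rw [show ∑ y : Y, ((if y = u then (1:ℂ) else 0) - (Fintype.card Y : ℂ)⁻¹) *
            (c y * ((if u = y then (1:ℂ) else 0) - (Fintype.card Y : ℂ)⁻¹))
          = (∑ y : Y, (if y = u then
              ((1 - (Fintype.card Y : ℂ)⁻¹) * (1 - (Fintype.card Y : ℂ)⁻¹)
                - (Fintype.card Y : ℂ)⁻¹ * (Fintype.card Y : ℂ)⁻¹) * c u else 0))
            + ((Fintype.card Y : ℂ)⁻¹ * (Fintype.card Y : ℂ)⁻¹) * ∑ y : Y, c y by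
        rw [Finset.mul_sum, ← Finset.sum_add_distrib]
        refine Finset.sum_congr rfl fun y _ => ?_
        by_cases h : y = u
        · subst h; simp only [eq_self_iff_true, if_true]; ring
        · simp only [if_neg h, if_neg (Ne.symm h)]; ring]
      rw [hS, Finset.sum_ite_eq' Finset.univ u]
      simp only [Finset.mem_univ, if_true]
      have hqq : q⁻¹ * q⁻¹ = (Fintype.card Y : ℂ)⁻¹ := by rw [← mul_inv, hq]
      rw [hqq]
      field_simp
      ring
    · rw [key_aux c Comp O hO1 hO2, hComp3, hComp2]
      simp only [hComp4]
      rw [show ∑ y : Y, ((if y = r then (1:ℂ) else 0) - (Fintype.card Y : ℂ)⁻¹) *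
            (c y * ((if u = y then (1:ℂ) else 0) - (Fintype.card Y : ℂ)⁻¹))
          = ((∑ y : Y, (if y = r then (-(Fintype.card Y : ℂ)⁻¹) * c r else 0))
            + (∑ y : Y, (if y = u then (-(Fintype.card Y : ℂ)⁻¹) * c u else 0)))
            + ((Fintype.card Y : ℂ)⁻¹ * (Fintype.card Y : ℂ)⁻¹) * ∑ y : Y, c y by
        rw [Finset.mul_sum, ← Finset.sum_add_distrib, ← Finset.sum_add_distrib]
        refine Finset.sum_congr rfl fun y _ => ?_
        by_cases h1 : y = r
        · subst h1
          simp only [eq_self_iff_true, if_true, if_neg hur, if_neg (Ne.symm hur)]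
          ring
        · by_cases h2 : y = u
          · subst h2
            simp only [eq_self_iff_true, if_true, if_neg h1]
            ring
          · simp only [if_neg h1, if_neg h2, if_neg (Ne.symm h2)]
            ring]
      rw [hS, Finset.sum_ite_eq' Finset.univ r, Finset.sum_ite_eq' Finset.univ u]
      simp only [Finset.mem_univ, if_true]
      have hqq : q⁻¹ * q⁻¹ = (Fintype.card Y : ℂ)⁻¹ := by rw [← mul_inv, hq]
      rw [hqq]
      field_simp
      ring
  · intro hc
    have hc1 : ∀ y : Y, c y = 1 := fun y => by rw [hc]; rfl
    have hqq : q⁻¹ * q⁻¹ = (Fintype.card Y : ℂ)⁻¹ := by rw [← mul_inv, hq]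
    have hT : ∀ b : Option Y, (Comp ∘L O ∘L Comp) (EuclideanSpace.single b 1)
        = EuclideanSpace.single b 1 := by
      intro b
      ext b'
      rw [coeff_aux ((Comp ∘L O ∘L Comp) (EuclideanSpace.single b 1)) b',
        key_aux c Comp O hO1 hO2 b' b]
      simp only [hc1, one_mul]
      rcases b with _ | v <;> rcases b' with _ | u
      · rw [hComp1]
        simp only [hComp2, hComp3, Finset.sum_const, Finset.card_univ, nsmul_eq_mul]
        rw [EuclideanSpace.single_apply]
        simp only [if_pos rfl]
        rw [mul_comm, hqq]
        field_simp
        simp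
      · rw [hComp1, hComp2]
        simp only [hComp2, hComp4]
        rw [show ∑ y : Y, q⁻¹ * ((if u = y then (1:ℂ) else 0) - (Fintype.card Y : ℂ)⁻¹)
            = (∑ y : Y, (if y = u then (q⁻¹ : ℂ) else 0))
              - (Fintype.card Y : ℂ) * ((Fintype.card Y : ℂ)⁻¹ * q⁻¹) by
          rw [show ((Fintype.card Y : ℂ)) * ((Fintype.card Y : ℂ)⁻¹ * q⁻¹)
              = ∑ _y : Y, (Fintype.card Y : ℂ)⁻¹ * q⁻¹ by
            rw [Finset.sum_const, Finset.card_univ, nsmul_eq_mul]]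
          rw [← Finset.sum_sub_distrib]
          refine Finset.sum_congr rfl fun y _ => ?_
          by_cases h : y = u
          · simp only [if_pos h, if_pos h.symm]; ring
          · simp only [if_neg h, if_neg (Ne.symm h)]; ring]
        rw [Finset.sum_ite_eq' Finset.univ u]
        simp only [Finset.mem_univ, if_true]
        rw [EuclideanSpace.single_apply]
        simp only [reduceCtorEq, if_false]
        field_simp
        simp
      · rw [hComp3, hComp1]
        simp only [hComp3, hComp4]
        rw [show ∑ y : Y, ((if y = v then (1:ℂ) else 0) - (Fintype.card Y : ℂ)⁻¹) * q⁻¹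
            = (∑ y : Y, (if y = v then (q⁻¹ : ℂ) else 0))
              - (Fintype.card Y : ℂ) * ((Fintype.card Y : ℂ)⁻¹ * q⁻¹) by
          rw [show ((Fintype.card Y : ℂ)) * ((Fintype.card Y : ℂ)⁻¹ * q⁻¹)
              = ∑ _y : Y, (Fintype.card Y : ℂ)⁻¹ * q⁻¹ by
            rw [Finset.sum_const, Finset.card_univ, nsmul_eq_mul]]
          rw [← Finset.sum_sub_distrib]
          refine Finset.sum_congr rfl fun y _ => ?_
          by_cases h : y = v
          · simp only [if_pos h]; ring
          · simp only [if_neg h]; ring]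
        rw [Finset.sum_ite_eq' Finset.univ v]
        simp only [Finset.mem_univ, if_true]
        rw [EuclideanSpace.single_apply]
        simp only [reduceCtorEq, if_false]
        field_simp
        simp
      · rw [hComp3, hComp2]
        simp only [hComp4]
        rw [show ∑ y : Y, ((if y = v then (1:ℂ) else 0) - (Fintype.card Y : ℂ)⁻¹) *
              ((if u = y then (1:ℂ) else 0) - (Fintype.card Y : ℂ)⁻¹)
            = ((if u = v then (1:ℂ) else 0)
              + ((∑ y : Y, (if y = v then (-(Fintype.card Y : ℂ)⁻¹) else 0))
              + (∑ y : Y, (if y = u then (-(Fintype.card Y : ℂ)⁻¹) else 0)))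
              + (Fintype.card Y : ℂ) * ((Fintype.card Y : ℂ)⁻¹ * (Fintype.card Y : ℂ)⁻¹)) by
          rw [show ((Fintype.card Y : ℂ)) * ((Fintype.card Y : ℂ)⁻¹ * (Fintype.card Y : ℂ)⁻¹)
              = ∑ _y : Y, (Fintype.card Y : ℂ)⁻¹ * (Fintype.card Y : ℂ)⁻¹ by
            rw [Finset.sum_const, Finset.card_univ, nsmul_eq_mul]]
          rw [show (if u = v then (1:ℂ) else 0) = ∑ y : Y, (if y = v then (if u = v then (1:ℂ) else 0) else 0) by
            rw [Finset.sum_ite_eq' Finset.univ v]; simp]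
          rw [← Finset.sum_add_distrib, ← Finset.sum_add_distrib, ← Finset.sum_add_distrib]
          refine Finset.sum_congr rfl fun y _ => ?_
          by_cases h1 : y = v
          · subst h1
            by_cases h2 : u = y
            · subst h2
              simp only [eq_self_iff_true, if_true]
              ring
            · simp only [eq_self_iff_true, if_true, if_neg h2, if_neg (Ne.symm h2)]
              ring
          · by_cases h2 : y = u
            · subst h2
              simp only [eq_self_iff_true, if_true, if_neg h1]
              ring
            · simp only [if_neg h1, if_neg h2, if_neg (Ne.symm h2)]
              ring]
        rw [Finset.sum_ite_eq' Finset.univ v, Finset.sum_ite_eq' Finset.univ u]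
        simp only [Finset.mem_univ, if_true]
        rw [EuclideanSpace.single_apply]
        simp only [Option.some.injEq]
        by_cases h : u = v
        · simp only [if_pos h, if_pos (congrArg some h ▸ rfl : (some u : Option Y) = some v)]
          field_simp
          rw [← hq]; ring
        · simp only [if_neg h, if_neg (fun h' : (some u : Option Y) = some v => h (Option.some.inj h'))]
          field_simp
          rw [← hq]; ring
    refine ContinuousLinearMap.ext fun v => ?_
    conv_lhs => rw [expand_aux v]
    rw [map_add, map_smul, map_sum]
    simp only [map_smul, hT]
    rw [ContinuousLinearMap.id_apply]
    exact (expand_aux v).symm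

end

/- `Ȳ = Y ∪ {⊥}` is modeled by `Option Y` (`⊥ = none`); `ℂ^Ȳ` by
`EuclideanSpace ℂ (Option Y)` with orthonormal basis `EuclideanSpace.single b 1`. -/

theorem stmt_5 {Y : Type*} [Fintype Y] [DecidableEq Y] [AddCommGroup Y]
    -- a character of `Y`
    (c : AddChar Y ℂ)
    -- the self-adjoint unitary `Comp`, given by its matrix entries
    (Comp : EuclideanSpace ℂ (Option Y) →L[ℂ] EuclideanSpace ℂ (Option Y))
    (hComp1 : inner (𝕜 := ℂ) (EuclideanSpace.single (none : Option Y) 1)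
        (Comp (EuclideanSpace.single none 1)) = 0)
    (hComp2 : ∀ u : Y, inner (𝕜 := ℂ) (EuclideanSpace.single (some u) 1)
        (Comp (EuclideanSpace.single (none : Option Y) 1)) =
        ((Real.sqrt (Fintype.card Y) : ℝ) : ℂ)⁻¹)
    (hComp3 : ∀ u : Y, inner (𝕜 := ℂ) (EuclideanSpace.single (none : Option Y) 1)
        (Comp (EuclideanSpace.single (some u) 1)) =
        ((Real.sqrt (Fintype.card Y) : ℝ) : ℂ)⁻¹)
    (hComp4 : ∀ u v : Y, inner (𝕜 := ℂ) (EuclideanSpace.single (some u) 1)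
        (Comp (EuclideanSpace.single (some v) 1)) =
        (if u = v then (1 : ℂ) else 0) - (Fintype.card Y : ℂ)⁻¹)
    -- the diagonal unitary `O_ŷ`
    (O : EuclideanSpace ℂ (Option Y) →L[ℂ] EuclideanSpace ℂ (Option Y))
    (hO1 : ∀ r : Y, O (EuclideanSpace.single (some r) 1) =
        c r • EuclideanSpace.single (some r) 1)
    (hO2 : O (EuclideanSpace.single (none : Option Y) 1) =
        EuclideanSpace.single none 1) :
    -- the matrix entries `γ^ŷ_{u,r}` of `cO_ŷ = Comp ∘ O_ŷ ∘ Comp`, for nontrivial `ŷ`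
    (c ≠ 1 →
      (inner (𝕜 := ℂ) (EuclideanSpace.single (none : Option Y) 1)
          ((Comp ∘L O ∘L Comp) (EuclideanSpace.single none 1)) = 0) ∧
      (∀ r : Y, inner (𝕜 := ℂ) (EuclideanSpace.single (none : Option Y) 1)
          ((Comp ∘L O ∘L Comp) (EuclideanSpace.single (some r) 1)) =
          c r / ((Real.sqrt (Fintype.card Y) : ℝ) : ℂ)) ∧
      (∀ u : Y, inner (𝕜 := ℂ) (EuclideanSpace.single (some u) 1)
          ((Comp ∘L O ∘L Comp) (EuclideanSpace.single (none : Option Y) 1)) =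
          c u / ((Real.sqrt (Fintype.card Y) : ℝ) : ℂ)) ∧
      (∀ u : Y, inner (𝕜 := ℂ) (EuclideanSpace.single (some u) 1)
          ((Comp ∘L O ∘L Comp) (EuclideanSpace.single (some u) 1)) =
          (1 - 2 / (Fintype.card Y : ℂ)) * c u + 1 / (Fintype.card Y : ℂ)) ∧
      (∀ u r : Y, u ≠ r → inner (𝕜 := ℂ) (EuclideanSpace.single (some u) 1)
          ((Comp ∘L O ∘L Comp) (EuclideanSpace.single (some r) 1)) =
          (1 - c r - c u) / (Fintype.card Y : ℂ))) ∧
    -- for the trivial character, `cO_{0̂}` is the identity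
    (c = 1 → Comp ∘L O ∘L Comp = ContinuousLinearMap.id ℂ (EuclideanSpace ℂ (Option Y))) := by
  exact stmt_5' c Comp hComp1 hComp2 hComp3 hComp4 O hO1 hO2

end
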